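/- Let m ≥ 1, let t be an integer with 1 ≤ t ≤ m-1 such that m/gcd(m,t) is odd, and let γ : 𝔽₂^m → 𝔽₂ be any Boolean function. Define f₀ on 𝔽₂^m × 𝔽₂^m by f₀(a,y) = Σ_{i=0}^{m-1} (a_i·a_{i+t} + a_{i+t} + a_{i+m-t})·y_i + γ(1+a₀, 1+a₁, …, 1+a_{m-1}) + Σ_{i=m-t}^{m-1} a_i·a_{i+t}, with indices taken modulo m. Then f₀ is a bent function on 𝔽₂^{2m}. -/

import Mathlib

/-- Core lemma: a difference sequence satisfying the χ-type relation on an odd cycle vanishes. -/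
lemma key_seq (d : ℕ) (hd : Odd d) (E C : ℕ → ZMod 2)
    (perE : ∀ j, E (j + d) = E j) (perC : ∀ j, C (j + d) = C j)
    (rel : ∀ j, E j = E (j+1) * (C (j+2) + E (j+2)) + E (j+2) * (1 + C (j+1))) :
    E 0 = 0 := by
  have hd1 : 1 ≤ d := hd.pos
  have two : ∀ x : ZMod 2, x ≠ 0 → x = 1 := by decide
  by_cases hA : ∃ j, E (j+1) = 0 ∧ E (j+2) = 0
  · obtain ⟨j₀, h1, h2⟩ := hA
    have prop : ∀ j, E (j+1) = 0 → E (j+2) = 0 → E j = 0 := by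
      intro j e1 e2
      rw [rel j, e1, e2]; ring
    have down : ∀ n, n ≤ j₀ + 1 → E (j₀ + 1 - n) = 0 ∧ E (j₀ + 2 - n) = 0 := by
      intro n
      induction n with
      | zero => intro _; simpa using ⟨h1, h2⟩
      | succ k ih =>
        intro hk
        obtain ⟨ha, hb⟩ := ih (by omega)
        have e1 : j₀ + 1 - k = (j₀ + 1 - (k+1)) + 1 := by omega
        have e2 : j₀ + 2 - k = (j₀ + 1 - (k+1)) + 2 := by omega
        refine ⟨prop _ (by rw [← e1]; exact ha) (by rw [← e2]; exact hb), ?_⟩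
        have e3 : j₀ + 2 - (k+1) = j₀ + 1 - k := by omega
        rw [e3]; exact ha
    simpa using (down (j₀+1) le_rfl).1
  · push_neg at hA
    have HB : ∀ j, E j = 1 ∨ E (j+1) = 1 := by
      intro j
      have := hA (j + d - 1)
      have e1 : j + d - 1 + 1 = j + d := by omega
      have e2 : j + d - 1 + 2 = (j+1) + d := by omega
      rw [e1, e2, perE, perE] at this
      by_cases h : E j = 0
      · exact Or.inr (two _ (this h))
      · exact Or.inl (two _ h)
    by_cases hz : ∃ j, E j = 0
    · obtain ⟨j₁, hj₁⟩ := hz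
      have hEr : E (j₁ + 3 * d) = 0 := by
        have step : ∀ k, E (j₁ + k * d) = E j₁ := by
          intro k; induction k with
          | zero => simp
          | succ n ih =>
            have e : j₁ + (n+1)*d = (j₁ + n*d) + d := by ring
            rw [e, perE]; exact ih
        exact (step 3).trans hj₁
      set r := j₁ + 3 * d with hr
      have S : ∀ n, n + 1 ≤ d →
          (E (r - n) = if n % 2 = 1 then 1 else 0) ∧
          (E (r - (n+1)) = if (n+1) % 2 = 1 then 1 else 0) := by
        intro n
        induction n with
        | zero =>
          intro _
          have h1 : E (r - 1) = 1 := by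
            rcases HB (r - 1) with h | h
            · exact h
            · have e : r - 1 + 1 = r := by omega
              rw [e, hEr] at h; exact absurd h (by decide)
          simp [hEr, h1]
        | succ k ih =>
          intro hk
          obtain ⟨hE0, hE1⟩ := ih (by omega)
          refine ⟨hE1, ?_⟩
          have hrk : k + 2 ≤ r := by omega
          rcases Nat.even_or_odd k with hke | hko
          · have hk2 : k % 2 = 0 := Nat.even_iff.mp hke
            rw [if_neg (by omega)] at hE0
            rw [if_pos (by omega)] at hE1
            rw [if_neg (by omega)]
            have hz1 : E (r - k + 1) = 1 := by
              rcases HB (r - k) with h | h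
              · rw [hE0] at h; exact absurd h (by decide)
              · exact h
            have hrel1 := rel (r - k - 1)
            have e1 : r - k - 1 + 1 = r - k := by omega
            have e2 : r - k - 1 + 2 = r - k + 1 := by omega
            have e3 : r - k - 1 = r - (k + 1) := by omega
            rw [e1, e2, e3, hE1, hE0, hz1] at hrel1
            have hC : C (r - k) = 0 := by
              revert hrel1
              generalize C (r - k + 1) = p
              generalize C (r - k) = q
              revert p q; decide
            have hrel2 := rel (r - k - 2)
            have f1 : r - k - 2 + 1 = r - (k + 1) := by omega
            have f2 : r - k - 2 + 2 = r - k := by omega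
            have f3 : r - k - 2 = r - (k + 2) := by omega
            rw [f1, f2, f3, hE0, hE1, hC] at hrel2
            rw [hrel2]
            have e4 : r - (k + 1 + 1) = r - (k + 2) := by omega
            ring
          · have hk2 : k % 2 = 1 := Nat.odd_iff.mp hko
            rw [if_neg (by omega)] at hE1
            rw [if_pos (by omega)]
            rcases HB (r - (k + 2)) with h | h
            · have e : r - (k+1+1) = r - (k+2) := by omega
              rw [e]; exact h
            · have e : r - (k+2) + 1 = r - (k+1) := by omega
              rw [e, hE1] at h; exact absurd h (by decide)
      have hfin := (S (d-1) (by omega)).2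
      have e : d - 1 + 1 = d := by omega
      rw [e, if_pos (Nat.odd_iff.mp hd)] at hfin
      have e2 : r - d + d = r := by omega
      have hper := perE (r - d)
      rw [e2] at hper
      rw [hfin, hEr] at hper
      exact absurd hper (by decide)
    · push_neg at hz
      have hE1 : ∀ j, E j = 1 := fun j => two _ (hz j)
      have hCstep : ∀ j, C (j+2) = 1 + C (j+1) := by
        intro j
        have h := rel j
        rw [hE1 j, hE1 (j+1), hE1 (j+2)] at h
        revert h
        generalize C (j+2) = p
        generalize C (j+1) = q
        revert p q; decide
      have hCn : ∀ n, C (1 + n) = C 1 + (n : ZMod 2) := by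
        intro n; induction n with
        | zero => simp
        | succ k ih =>
          rw [show 1 + (k+1) = k + 2 by ring, hCstep k, show k + 1 = 1 + k by ring, ih]
          push_cast
          ring
      have h1 := hCn d
      have h2 := perC 1
      rw [h2] at h1
      have hd0 : ((d : ZMod 2)) = 0 := by
        have := h1.symm
        rwa [left_eq_add] at h1
      rw [ZMod.natCast_eq_zero_iff] at hd0
      exact absurd hd0 (by rwa [Nat.odd_iff, ← Nat.two_dvd_ne_zero] at hd)

lemma pi_inj (m t : ℕ) [NeZero m] (hodd : Odd (m / Nat.gcd m t)) :
    Function.Injective (fun a : ZMod m → ZMod 2 => fun i : ZMod m =>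
      a i * a (i + t) + a (i + t) + a (i + m - t)) := by
  intro a c hac
  have hg : Nat.gcd m t ∣ t := Nat.gcd_dvd_right m t
  have hgm : Nat.gcd m t ∣ m := Nat.gcd_dvd_left m t
  have hdt : (((m / Nat.gcd m t) * t : ℕ) : ZMod m) = 0 := by
    have h1 : (m / Nat.gcd m t) * t = m * (t / Nat.gcd m t) := by
      calc (m / Nat.gcd m t) * t
          = (m / Nat.gcd m t) * (Nat.gcd m t * (t / Nat.gcd m t)) := by
            rw [Nat.mul_div_cancel' hg]
        _ = (m / Nat.gcd m t * Nat.gcd m t) * (t / Nat.gcd m t) := by ring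
        _ = m * (t / Nat.gcd m t) := by rw [Nat.div_mul_cancel hgm]
    rw [h1]; push_cast; simp
  set d := m / Nat.gcd m t with hd
  funext i
  set idx : ℕ → ZMod m := fun j => i + ((j * t : ℕ) : ZMod m) with hidx
  have hstep : ∀ j, idx j + (t : ZMod m) = idx (j + 1) := by
    intro j
    simp only [hidx]
    rw [add_assoc]
    congr 1
    push_cast
    ring
  have hper : ∀ j, idx (j + d) = idx j := by
    intro j
    simp only [hidx]
    congr 1
    have : (j + d) * t = j * t + d * t := by ring
    rw [this]
    push_cast [hdt]
    ring
  have hsub : ∀ j, idx (j+1) + (m : ZMod m) - (t : ZMod m) = idx j := by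
    intro j
    rw [ZMod.natCast_self, add_zero, ← hstep j, add_sub_cancel_right]
  have key := key_seq d hodd (fun j => a (idx j) + c (idx j)) (fun j => c (idx j))
    (fun j => by simp only [hper]) (fun j => by simp only [hper]) ?_
  · have h0 : idx 0 = i := by simp [hidx]
    simp only [h0] at key
    have : ∀ x y : ZMod 2, x + y = 0 → x = y := by decide
    exact this _ _ key
  · intro j
    have h := congrFun hac (idx (j+1))
    simp only at h
    rw [hsub j, hstep (j+1)] at h
    revert h
    generalize a (idx (j+1)) = x1
    generalize a (idx (j+2)) = x2
    generalize c (idx (j+1)) = y1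
    generalize c (idx (j+2)) = y2
    generalize a (idx j) = p
    generalize c (idx j) = q
    revert x1 x2 y1 y2 p q
    decide


lemma sgn_add (u v : ZMod 2) :
    ((-1 : ℤ)) ^ ((u + v).val) = (-1) ^ u.val * (-1) ^ v.val := by revert u v; decide

lemma sum_sgn {m : ℕ} [NeZero m] (c : ZMod m → ZMod 2) :
    ∑ y : ZMod m → ZMod 2, (-1 : ℤ) ^ (∑ i : ZMod m, c i * y i).val =
      if c = 0 then 2 ^ m else 0 := by
  by_cases hc : c = 0
  · rw [if_pos hc]
    have : ∀ y : ZMod m → ZMod 2, (∑ i : ZMod m, c i * y i) = 0 := by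
      intro y; rw [hc]; simp
    simp only [this]
    simp [Finset.card_univ, Fintype.card_fun, ZMod.card]
  · rw [if_neg hc]
    obtain ⟨i₀, hi₀⟩ : ∃ i, c i ≠ 0 := by
      by_contra h; push_neg at h; exact hc (funext fun i => h i)
    set e : ZMod m → ZMod 2 := Function.update (0 : ZMod m → ZMod 2) i₀ 1 with he
    have hsum : ∀ y : ZMod m → ZMod 2,
        (∑ i : ZMod m, c i * (y + e) i) = (∑ i : ZMod m, c i * y i) + 1 := by
      intro y
      have : ∀ i : ZMod m, c i * (y + e) i = c i * y i + (if i = i₀ then c i else 0) := by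
        intro i
        by_cases h : i = i₀
        · subst h
          simp [he, Function.update_apply, mul_add]
        · simp [he, Function.update_apply, h, mul_add]
      rw [Finset.sum_congr rfl (fun i _ => this i), Finset.sum_add_distrib,
        Finset.sum_ite_eq' Finset.univ i₀ c]
      simp only [Finset.mem_univ, if_pos]
      congr 1
      revert hi₀; generalize c i₀ = x; revert x; decide
    have hneg : ∀ u : ZMod 2, (-1 : ℤ) ^ ((u + 1).val) = -((-1) ^ u.val) := by decide
    set F : (ZMod m → ZMod 2) → ℤ :=
      fun y => (-1 : ℤ) ^ (∑ i : ZMod m, c i * y i).val with hF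
    have hbij : ∑ y : ZMod m → ZMod 2, F (y + e) = ∑ y : ZMod m → ZMod 2, F y :=
      Fintype.sum_equiv (Equiv.addRight e) _ _ (fun y => rfl)
    have h3 : ∑ y : ZMod m → ZMod 2, F (y + e) = ∑ y : ZMod m → ZMod 2, -(F y) := by
      apply Finset.sum_congr rfl
      intro y _
      rw [hF]
      simp only [hsum y]
      rw [hneg]
    have h2 : (∑ y : ZMod m → ZMod 2, F y) = -∑ y : ZMod m → ZMod 2, F y := by
      conv_lhs => rw [← hbij, h3]
      rw [Finset.sum_neg_distrib]
    have : (∑ y : ZMod m → ZMod 2, F y) = 0 := by linarith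
    exact this

/-- The Walsh transform of a Boolean function on `𝔽₂^m × 𝔽₂^m` (identified with `𝔽₂^{2m}`):
`W_f(b) = Σ_{x} (-1)^{f(x) + Σᵢ x.1ᵢ b.1ᵢ + Σᵢ x.2ᵢ b.2ᵢ}`, exponent lifted to `{0,1} ⊆ ℤ`. -/
def walshTransform2 {m : ℕ} [NeZero m]
    (f : (ZMod m → ZMod 2) × (ZMod m → ZMod 2) → ZMod 2)
    (b : (ZMod m → ZMod 2) × (ZMod m → ZMod 2)) : ℤ :=
  ∑ x : (ZMod m → ZMod 2) × (ZMod m → ZMod 2),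
    (-1 : ℤ) ^ (f x + ∑ i : ZMod m, x.1 i * b.1 i + ∑ i : ZMod m, x.2 i * b.2 i).val

/-- `f` on `𝔽₂^m × 𝔽₂^m ≅ 𝔽₂^{2m}` is bent if `W_f(b) = ±2^m` for every `b`. -/
def IsBent2 {m : ℕ} [NeZero m]
    (f : (ZMod m → ZMod 2) × (ZMod m → ZMod 2) → ZMod 2) : Prop :=
  ∀ b, walshTransform2 f b = 2 ^ m ∨ walshTransform2 f b = -(2 ^ m)

/-- with `m ≥ 1`, `1 ≤ t ≤ m-1` such that `m / gcd(m,t)` is odd, and any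
Boolean function `γ` on `𝔽₂^m`, the function
`f₀(a,y) = Σ_{i=0}^{m-1} (aᵢ·a_{i+t} + a_{i+t} + a_{i+m-t})·yᵢ + γ(1+a₀,…,1+a_{m-1})
           + Σ_{i=m-t}^{m-1} aᵢ·a_{i+t}` (indices modulo `m`) is bent on `𝔽₂^{2m}`. -/
theorem statement13 (m t : ℕ) (hm : 1 ≤ m) [NeZero m]
    (ht1 : 1 ≤ t) (ht2 : t ≤ m - 1) (hodd : Odd (m / Nat.gcd m t))
    (γ : (ZMod m → ZMod 2) → ZMod 2)
    (f : (ZMod m → ZMod 2) × (ZMod m → ZMod 2) → ZMod 2)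
    (hf : ∀ (a y : ZMod m → ZMod 2),
      f (a, y) = ∑ i : ZMod m, (a i * a (i + t) + a (i + t) + a (i + m - t)) * y i +
        γ (fun j => 1 + a j) +
        ∑ i ∈ Finset.Ico (m - t) m, a i * a (i + t)) :
    IsBent2 f := by
  intro b
  set π : (ZMod m → ZMod 2) → (ZMod m → ZMod 2) :=
    fun a i => a i * a (i + t) + a (i + t) + a (i + m - t) with hπ
  have hπinj : Function.Injective π := pi_inj m t hodd
  have hπbij : Function.Bijective π := Finite.injective_iff_bijective.mp hπinj
  obtain ⟨a₀, ha₀⟩ := hπbij.2 b.2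
  have comb : ∀ (a y : ZMod m → ZMod 2),
      (∑ i : ZMod m, (π a i) * y i) + (∑ i : ZMod m, y i * b.2 i)
        = ∑ i : ZMod m, (π a i + b.2 i) * y i := by
    intro a y
    rw [← Finset.sum_add_distrib]
    apply Finset.sum_congr rfl
    intro i _
    ring
  have hexp : ∀ (a y : ZMod m → ZMod 2),
      f (a, y) + (∑ i : ZMod m, a i * b.1 i) + (∑ i : ZMod m, y i * b.2 i)
        = (γ (fun j => 1 + a j) + (∑ i ∈ Finset.Ico (m - t) m, a i * a (i + t))
            + ∑ i : ZMod m, a i * b.1 i)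
          + ∑ i : ZMod m, (π a i + b.2 i) * y i := by
    intro a y
    rw [hf a y, ← comb a y, hπ]
    ring
  have hsplit : walshTransform2 f b
      = ∑ a : ZMod m → ZMod 2,
          ((-1 : ℤ) ^ ((γ (fun j => 1 + a j)
              + (∑ i ∈ Finset.Ico (m - t) m, a i * a (i + t))
              + ∑ i : ZMod m, a i * b.1 i)).val
            * if (π a = b.2) then (2 : ℤ) ^ m else 0) := by
    rw [walshTransform2, Fintype.sum_prod_type]
    apply Finset.sum_congr rfl
    intro a _
    have hterm : ∀ y : ZMod m → ZMod 2,
        (-1 : ℤ) ^ (f (a, y) + (∑ i : ZMod m, a i * b.1 i)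
            + (∑ i : ZMod m, y i * b.2 i)).val
          = (-1 : ℤ) ^ ((γ (fun j => 1 + a j)
              + (∑ i ∈ Finset.Ico (m - t) m, a i * a (i + t))
              + ∑ i : ZMod m, a i * b.1 i)).val
            * (-1 : ℤ) ^ (∑ i : ZMod m, (π a i + b.2 i) * y i).val := by
      intro y
      rw [hexp a y, sgn_add]
    simp only [hterm]
    rw [← Finset.mul_sum, sum_sgn]
    have hcond : ((fun i => π a i + b.2 i) = 0) ↔ (π a = b.2) := by
      constructor
      · intro h
        funext i
        have hi := congrFun h i
        simp only [Pi.zero_apply] at hi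
        revert hi
        generalize π a i = u
        generalize b.2 i = v
        revert u v
        decide
      · intro h
        funext i
        rw [show π a i = b.2 i from congrFun h i]
        simp only [Pi.zero_apply]
        generalize b.2 i = v
        revert v
        decide
    rw [if_congr hcond rfl rfl]
  rw [hsplit, Finset.sum_eq_single_of_mem a₀ (Finset.mem_univ a₀)
    (fun a _ hne => by
      rw [if_neg fun h => hne (hπinj (h.trans ha₀.symm)), mul_zero]),
    if_pos ha₀]
  have : ∀ u : ZMod 2, (-1 : ℤ) ^ u.val = 1 ∨ (-1 : ℤ) ^ u.val = -1 := by decide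
  rcases this ((γ (fun j => 1 + a₀ j)
      + (∑ i ∈ Finset.Ico (m - t) m, a₀ i * a₀ (i + t))
      + ∑ i : ZMod m, a₀ i * b.1 i)) with h | h
  · left; rw [h, one_mul]
  · right; rw [h]; ring
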